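/- arXiv:0903.5269 — 3 statements merged into one kernel-verified Lean document; each statement's English description precedes it below -/
import Mathlib

section
/- For every R ∈ 𝔯(V), writing Ric := Ric(R), Ric* := Ric*(R), τ := τ(R): (1) π₁(R) = 0 if and only if τ = 0; (2) π₂(R) = 0 if and only if S Ric = (τ/n) g; (3) π₃(R) = 0 if and only if Ric is symmetric; (4) π₄(R) = 0 if and only if Λ(Ric* + (3/(n+1)) Ric) = 0; (5) π₅(R) = 0 if and only if S((1/(n−1)) Ric + Ric*) = (τ/(n−1)) g. -/
open scoped BigOperators
open Pointwise

namespace GCT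

variable {V : Type*} [AddCommGroup V] [Module ℝ V]

/-- Linearity of a real valued function of one vector variable. -/
def IsLin (f : V → ℝ) : Prop :=
  (∀ x y : V, f (x + y) = f x + f y) ∧ (∀ (c : ℝ) (x : V), f (c • x) = c * f x)

/-- Bilinearity. -/
def IsBilin (h : V → V → ℝ) : Prop :=
  (∀ y, IsLin (fun x => h x y)) ∧ (∀ x, IsLin (fun y => h x y))

/-- 4-linearity. -/
def IsMulti4 (F : V → V → V → V → ℝ) : Prop :=
  (∀ y z w, IsLin (fun x => F x y z w)) ∧ (∀ x z w, IsLin (fun y => F x y z w)) ∧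
    (∀ x y w, IsLin (fun z => F x y z w)) ∧ (∀ x y z, IsLin (fun w => F x y z w))

/-- The space 𝔯(V) of generalized curvature tensors. -/
def rSet (V : Type*) [AddCommGroup V] [Module ℝ V] : Set (V → V → V → V → ℝ) :=
  {F | IsMulti4 F ∧ (∀ x y z w, F x y z w = - F y x z w) ∧
    (∀ x y z w, F x y z w + F y z x w + F z x y w = 0)}

/-- The space 𝔞(V) of algebraic curvature tensors. -/
def aSet (V : Type*) [AddCommGroup V] [Module ℝ V] : Set (V → V → V → V → ℝ) :=
  {F | F ∈ rSet V ∧ ∀ x y z w, F x y z w = - F x y w z}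

/-- The space 𝔰(V). -/
def sSet (V : Type*) [AddCommGroup V] [Module ℝ V] : Set (V → V → V → V → ℝ) :=
  {F | F ∈ rSet V ∧ ∀ x y z w, F x y z w = F x y w z}

/-- The conjugate tensor R*. -/
def conj (F : V → V → V → V → ℝ) : V → V → V → V → ℝ := fun x y z w => - F x y w z

/-- The product h·k of two bilinear forms. -/
def prodB (h k : V → V → ℝ) : V → V → V → V → ℝ := fun x y z w => h x y * k z w

/-- The wedge product h ∧_t k of two bilinear forms. -/
def wedge (t : ℝ) (h k : V → V → ℝ) : V → V → V → V → ℝ :=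
  fun x y z w => h x z * k y w - h y z * k x w - t * (h x w * k y z - h y w * k x z)

/-- Antisymmetric part Λh. -/
noncomputable def lamB (h : V → V → ℝ) : V → V → ℝ := fun x y => (h x y - h y x) / 2

/-- Symmetric part Sh. -/
noncomputable def symB (h : V → V → ℝ) : V → V → ℝ := fun x y => (h x y + h y x) / 2

/-- The idempotent ψ. -/
noncomputable def psi (F : V → V → V → V → ℝ) : V → V → V → V → ℝ :=
  fun x y z w => (F x y z w + F y x w z + F z w x y + F w z y x) / 4

/-- The idempotent μ. -/
noncomputable def mu (F : V → V → V → V → ℝ) : V → V → V → V → ℝ :=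
  fun x y z w =>
    (3 * F x y z w + 3 * F x y w z + F x w z y + F x z w y + F w y z x + F z y w x) / 8

/-- A linear equivalence is a g-isometry. -/
def IsIsometry (g : V → V → ℝ) (φ : V ≃ₗ[ℝ] V) : Prop := ∀ x y, g (φ x) (φ y) = g x y

/-- Pull back of a 4-tensor along a linear equivalence (the natural action). -/
def pullT (φ : V ≃ₗ[ℝ] V) (F : V → V → V → V → ℝ) : V → V → V → V → ℝ :=
  fun x y z w => F (φ x) (φ y) (φ z) (φ w)

/-- Invariance of a set of 4-tensors under the orthogonal group O(V,g). -/
def OInv (g : V → V → ℝ) (S : Set (V → V → V → V → ℝ)) : Prop :=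
  ∀ φ : V ≃ₗ[ℝ] V, IsIsometry g φ → ∀ F ∈ S, pullT φ F ∈ S

/-- Irreducibility of a subspace of 4-tensors as an O(V,g)-module:
there is no proper nonzero invariant subspace. -/
def OIrred (g : V → V → ℝ) (W : Set (V → V → V → V → ℝ)) : Prop :=
  ∀ U : Submodule ℝ (V → V → V → V → ℝ), (U : Set (V → V → V → V → ℝ)) ⊆ W →
    (∀ φ : V ≃ₗ[ℝ] V, IsIsometry g φ → ∀ F ∈ U, pullT φ F ∈ U) →
    (U : Set (V → V → V → V → ℝ)) = {0} ∨ (U : Set (V → V → V → V → ℝ)) = W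

/-- Isomorphism of two invariant subspaces as O(V,g)-modules. -/
def OEquivMod (g : V → V → ℝ) (S T : Set (V → V → V → V → ℝ)) : Prop :=
  ∃ e : (V → V → V → V → ℝ) →ₗ[ℝ] (V → V → V → V → ℝ),
    Set.BijOn e S T ∧
      ∀ φ : V ≃ₗ[ℝ] V, IsIsometry g φ → ∀ F ∈ S, e (pullT φ F) = pullT φ (e F)

variable (n : ℕ) (b : Module.Basis (Fin n) ℝ V) (g : V → V → ℝ)

/-- Inverse metric components g^{ij}. -/
noncomputable def ginv : Matrix (Fin n) (Fin n) ℝ :=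
  (Matrix.of fun i j => g (b i) (b j))⁻¹

/-- Ric(R)(x,y) := Σ g^{ij} R(e_i,x,y,e_j). -/
noncomputable def Ric (F : V → V → V → V → ℝ) : V → V → ℝ :=
  fun x y => ∑ i, ∑ j, ginv n b g i j * F (b i) x y (b j)

/-- Ric*(R)(x,y) := Σ g^{ij} R(x,e_i,e_j,y). -/
noncomputable def RicS (F : V → V → V → V → ℝ) : V → V → ℝ :=
  fun x y => ∑ i, ∑ j, ginv n b g i j * F x (b i) (b j) y

/-- The generalized scalar curvature τ(R). -/
noncomputable def tau (F : V → V → V → V → ℝ) : ℝ :=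
  ∑ i, ∑ j, ∑ k, ∑ l, ginv n b g i l * ginv n b g j k * F (b i) (b j) (b k) (b l)

/-- The g-trace of a bilinear form. -/
noncomputable def trg (h : V → V → ℝ) : ℝ := ∑ i, ∑ j, ginv n b g i j * h (b i) (b j)

/-- The scalar product on 4-tensors given by full contraction with g. -/
noncomputable def inner4 (F T : V → V → V → V → ℝ) : ℝ :=
  ∑ i, ∑ j, ∑ k, ∑ l, ∑ i', ∑ j', ∑ k', ∑ l',
    ginv n b g i i' * ginv n b g j j' * ginv n b g k k' * ginv n b g l l' *
      F (b i) (b j) (b k) (b l) * T (b i') (b j') (b k') (b l')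

/-- W-projection π₁. -/
noncomputable def pi1 (F : V → V → V → V → ℝ) : V → V → V → V → ℝ :=
  (-(tau n b g F) / ((n : ℝ) * ((n : ℝ) - 1))) • wedge 0 g g

/-- W-projection π₂. -/
noncomputable def pi2 (F : V → V → V → V → ℝ) : V → V → V → V → ℝ :=
  ((1 : ℝ) / ((n : ℝ) - 1)) • wedge 0 (((tau n b g F) / (n : ℝ)) • g - symB (Ric n b g F)) g

/-- W-projection π₃. -/
noncomputable def pi3 (F : V → V → V → V → ℝ) : V → V → V → V → ℝ :=
  ((-1 : ℝ) / ((n : ℝ) + 1)) •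
    ((2 : ℝ) • prodB (lamB (Ric n b g F)) g + wedge 0 (lamB (Ric n b g F)) g)

/-- W-projection π₄. -/
noncomputable def pi4 (F : V → V → V → V → ℝ) : V → V → V → V → ℝ :=
  ((-1 : ℝ) / ((n : ℝ) ^ 2 - 4)) •
      ((2 : ℝ) • prodB (lamB (RicS n b g F)) g + wedge ((n : ℝ) + 1) (lamB (RicS n b g F)) g)
    - ((3 : ℝ) / (((n : ℝ) ^ 2 - 4) * ((n : ℝ) + 1))) •
      ((2 : ℝ) • prodB (lamB (Ric n b g F)) g + wedge ((n : ℝ) + 1) (lamB (Ric n b g F)) g)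

/-- W-projection π₅. -/
noncomputable def pi5 (F : V → V → V → V → ℝ) : V → V → V → V → ℝ :=
  ((1 : ℝ) / (((n : ℝ) - 1) * ((n : ℝ) - 2))) •
    ((tau n b g F) • wedge 0 g g -
      ((1 : ℝ) / (n : ℝ)) •
        wedge ((n : ℝ) - 1) (symB (Ric n b g F + ((n : ℝ) - 1) • RicS n b g F)) g)

/-- W-projection π₆. -/
noncomputable def pi6 (F : V → V → V → V → ℝ) : V → V → V → V → ℝ :=
  psi F + ((1 : ℝ) / (2 * ((n : ℝ) - 2))) • wedge 1 (symB (Ric n b g F + RicS n b g F)) g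
    - ((tau n b g F) / (((n : ℝ) - 1) * ((n : ℝ) - 2))) • wedge 0 g g

/-- W-projection π₇. -/
noncomputable def pi7 (F : V → V → V → V → ℝ) : V → V → V → V → ℝ :=
  mu F + ((1 : ℝ) / (2 * (n : ℝ))) • wedge (-1) (symB (Ric n b g F - RicS n b g F)) g
    + ((1 : ℝ) / (2 * ((n : ℝ) + 2))) • prodB (lamB ((3 : ℝ) • Ric n b g F - RicS n b g F)) g
    + ((1 : ℝ) / (4 * ((n : ℝ) + 2))) • wedge (-1) (lamB ((3 : ℝ) • Ric n b g F - RicS n b g F)) g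

/-- W-projection π₈. -/
noncomputable def pi8 (F : V → V → V → V → ℝ) : V → V → V → V → ℝ :=
  F - psi F - mu F
    + ((1 : ℝ) / (2 * ((n : ℝ) - 2))) • prodB (lamB (Ric n b g F + RicS n b g F)) g
    + ((1 : ℝ) / (4 * ((n : ℝ) - 2))) • wedge 3 (lamB (Ric n b g F + RicS n b g F)) g

/-- A-projection α₁. -/
noncomputable def al1 (F : V → V → V → V → ℝ) : V → V → V → V → ℝ :=
  (-(tau n b g F) / ((n : ℝ) * ((n : ℝ) - 1))) • wedge 0 g g

/-- A-projection α₂. -/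
noncomputable def al2 (F : V → V → V → V → ℝ) : V → V → V → V → ℝ :=
  ((-1 : ℝ) / (2 * ((n : ℝ) - 2))) • wedge 1 (symB (Ric n b g F + RicS n b g F)) g
    + ((2 * tau n b g F) / ((n : ℝ) * ((n : ℝ) - 2))) • wedge 0 g g

/-- A-projection α₃. -/
noncomputable def al3 (F : V → V → V → V → ℝ) : V → V → V → V → ℝ :=
  ((-1 : ℝ) / (2 * (n : ℝ))) • wedge (-1) (symB (Ric n b g F - RicS n b g F)) g

/-- A-projection α₄. -/
noncomputable def al4 (F : V → V → V → V → ℝ) : V → V → V → V → ℝ :=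
  ((-1 : ℝ) / (4 * ((n : ℝ) + 2))) •
    ((2 : ℝ) • prodB (lamB ((3 : ℝ) • Ric n b g F - RicS n b g F)) g
      + wedge (-1) (lamB ((3 : ℝ) • Ric n b g F - RicS n b g F)) g)

/-- A-projection α₅. -/
noncomputable def al5 (F : V → V → V → V → ℝ) : V → V → V → V → ℝ :=
  ((-1 : ℝ) / (4 * ((n : ℝ) - 2))) •
    ((2 : ℝ) • prodB (lamB (Ric n b g F + RicS n b g F)) g
      + wedge 3 (lamB (Ric n b g F + RicS n b g F)) g)

/-- A-projection α₆. -/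
noncomputable def al6 (F : V → V → V → V → ℝ) : V → V → V → V → ℝ :=
  psi F - al1 n b g F - al2 n b g F

/-- A-projection α₇. -/
noncomputable def al7 (F : V → V → V → V → ℝ) : V → V → V → V → ℝ :=
  mu F - al3 n b g F - al4 n b g F

/-- A-projection α₈. -/
noncomputable def al8 (F : V → V → V → V → ℝ) : V → V → V → V → ℝ :=
  F - mu F - psi F - al5 n b g F

/-- Curvature tensors of constant curvature type. -/
noncomputable def uSet : Set (V → V → V → V → ℝ) :=
  {F | ∃ c : ℝ, ∀ x y z w, F x y z w = c * (g x w * g y z - g x z * g y w)}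

/-- Ricci traceless algebraic curvature tensors built from a traceless symmetric form. -/
noncomputable def zSet : Set (V → V → V → V → ℝ) :=
  {F | ∃ Xi : V → V → ℝ, IsBilin Xi ∧ (∀ x y, Xi x y = Xi y x) ∧ trg n b g Xi = 0 ∧
    ∀ x y z w, F x y z w = Xi x w * g y z + g x w * Xi y z - Xi x z * g y w - g x z * Xi y w}

/-- Weyl type (Ricci flat algebraic) curvature tensors. -/
noncomputable def wSet : Set (V → V → V → V → ℝ) :=
  {F | F ∈ aSet V ∧ Ric n b g F = fun _ _ => 0}

/-- The projective curvature tensor p(R). -/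
noncomputable def pProj (F : V → V → V → V → ℝ) : V → V → V → V → ℝ :=
  F - pi1 n b g F - pi2 n b g F - pi3 n b g F


section AuxProofs

variable {V : Type*} [AddCommGroup V] [Module ℝ V]

lemma isLin_zero {f : V → ℝ} (hf : IsLin f) : f 0 = 0 := by
  have h := hf.2 0 0
  simpa using h

lemma basis_pair_contradiction {n : ℕ} (hn : 3 ≤ n) (b : Module.Basis (Fin n) ℝ V)
    (x : V) (key : ∀ y : V, ∃ c : ℝ, y = c • x) : False := by
  obtain ⟨c0, h0⟩ := key (b ⟨0, by omega⟩)
  obtain ⟨c1, h1⟩ := key (b ⟨1, by omega⟩)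
  have hc0 : c0 ≠ 0 := by
    intro hc; rw [hc, zero_smul] at h0; exact b.ne_zero _ h0
  have hx : x = c0⁻¹ • b ⟨0, by omega⟩ := by
    rw [h0, smul_smul, inv_mul_cancel₀ hc0, one_smul]
  rw [hx, smul_smul] at h1
  have h2 := congrArg (fun v => b.repr v ⟨1, by omega⟩) h1
  simp [Module.Basis.repr_self, Finsupp.single_apply, Fin.ext_iff] at h2

lemma nondegA {n : ℕ} (hn : 3 ≤ n) (b : Module.Basis (Fin n) ℝ V) (g : V → V → ℝ)
    (hgb : IsBilin g) (hgnd : ∀ x : V, (∀ y : V, g x y = 0) → x = 0)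
    (h : V → V → ℝ) (H : ∀ x y z w, h x z * g y w = h y z * g x w) :
    ∀ x z, h x z = 0 := by
  intro x z
  by_contra hxz
  refine basis_pair_contradiction hn b x (fun y => ⟨h y z / h x z, ?_⟩)
  have h1 : ∀ w, g (y - (h y z / h x z) • x) w = 0 := by
    intro w
    have ha : g (y + (-(h y z / h x z)) • x) w
        = g y w + g ((-(h y z / h x z)) • x) w := (hgb.1 w).1 y _
    have hb : g ((-(h y z / h x z)) • x) w = (-(h y z / h x z)) * g x w :=
      (hgb.1 w).2 _ x
    rw [sub_eq_add_neg, ← neg_smul, ha, hb]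
    field_simp
    linear_combination H x y z w
  have h2 := hgnd _ h1
  rw [sub_eq_zero] at h2
  exact h2

lemma nondegB (g : V → V → ℝ)
    (hgnd : ∀ x : V, (∀ y : V, g x y = 0) → x = 0)
    (L : V → V → ℝ) (hL0 : ∀ x : V, L x 0 = 0)
    (H : ∀ x y w, L x y * g y w = 0) : ∀ x y, L x y = 0 := by
  intro x y
  by_cases hy : ∀ w, g y w = 0
  · rw [hgnd y hy]; exact hL0 x
  · push_neg at hy
    obtain ⟨w, hw⟩ := hy
    rcases mul_eq_zero.mp (H x y w) with h | h
    · exact h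
    · exact absurd h hw

lemma g_nontriv {n : ℕ} (hn : 3 ≤ n) (b : Module.Basis (Fin n) ℝ V) (g : V → V → ℝ)
    (hgnd : ∀ x : V, (∀ y : V, g x y = 0) → x = 0) : ∃ x y : V, g x y ≠ 0 := by
  by_contra hc
  push_neg at hc
  exact b.ne_zero ⟨0, by omega⟩ (hgnd _ (fun y => hc _ y))

lemma core4 {n : ℕ} (hn : 3 ≤ n) (b : Module.Basis (Fin n) ℝ V) (g : V → V → ℝ)
    (hgs : ∀ x y, g x y = g y x)
    (hgnd : ∀ x : V, (∀ y : V, g x y = 0) → x = 0)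
    (L : V → V → ℝ) (hLd : ∀ u, L u u = 0) (hL0 : ∀ x, L x 0 = 0)
    (hO : ∀ x y z w, 2 * L x y * g z w + L x z * g y w - L y z * g x w
        - ((n:ℝ)+1) * (L x w * g y z - L y w * g x z) = 0) :
    ∀ x y, L x y = 0 := by
  have hn3 : (3:ℝ) ≤ (n:ℝ) := by exact_mod_cast hn
  have h24 : ((n:ℝ)^2 - 4) ≠ 0 := by nlinarith
  refine nondegB g hgnd L hL0 (fun x y z => ?_)
  have h1 := hO x y z y
  have h2 := hO x y y z
  rw [hLd y, hgs z y] at h1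
  rw [hLd y] at h2
  have h3 : ((n:ℝ)^2 - 4) * (L x y * g y z) = 0 := by
    linear_combination (-((n:ℝ)+1)) * h1 - h2
  exact (mul_eq_zero.mp h3).resolve_left h24

lemma core5 {n : ℕ} (hn : 3 ≤ n) (b : Module.Basis (Fin n) ℝ V) (g : V → V → ℝ)
    (hgb : IsBilin g) (hgs : ∀ x y, g x y = g y x)
    (hgnd : ∀ x : V, (∀ y : V, g x y = 0) → x = 0)
    (k : V → V → ℝ) (hks : ∀ u v, k u v = k v u)
    (hO : ∀ x y z w, k x z * g y w - k y z * g x w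
       - ((n:ℝ)-1) * (k x w * g y z - k y w * g x z) = 0) :
    ∀ u v, k u v = 0 := by
  have hn3 : (3:ℝ) ≤ (n:ℝ) := by exact_mod_cast hn
  have hnn : (n:ℝ) ≠ 0 := by linarith
  have hn2 : (n:ℝ) - 2 ≠ 0 := by linarith
  have hK : ∀ x y z w, k y z * g x w = k x w * g y z := by
    intro x y z w
    have h1 := hO x y z w
    have h2 := hO z w x y
    rw [hks z x, hks w x, hks z y, hks w y, hgs w y, hgs z y, hgs w x, hgs z x] at h2
    have h3 : ((n:ℝ) - 2) * (k y z * g x w - k x w * g y z) = 0 := by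
      linear_combination h1 - h2
    have h4 := (mul_eq_zero.mp h3).resolve_left hn2
    linarith
  by_cases hk : ∀ u v, k u v = 0
  · exact hk
  exfalso
  push_neg at hk
  obtain ⟨a, c, hac⟩ := hk
  by_cases hgac : g a c = 0
  · have hall : ∀ x w, g x w = 0 := by
      intro x w
      have h5 := hK x a c w
      rw [hgac, mul_zero] at h5
      exact (mul_eq_zero.mp h5).resolve_left hac
    obtain ⟨x, y, hxy⟩ := g_nontriv hn b g hgnd
    exact hxy (hall x y)
  · have hkd : ∀ x w, k x w = (k a c / g a c) * g x w := by
      intro x w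
      have h5 := hK x a c w
      field_simp
      linear_combination -h5
    have hd0 : k a c / g a c ≠ 0 := div_ne_zero hac hgac
    have hgA : ∀ x y z w, g x z * g y w = g y z * g x w := by
      intro x y z w
      have h1 := hO x y z w
      rw [hkd x z, hkd y z, hkd x w, hkd y w] at h1
      have h4 : (k a c / g a c) * ((n:ℝ) * (g x z * g y w - g y z * g x w)) = 0 := by
        linear_combination h1
      have h5 := (mul_eq_zero.mp h4).resolve_left hd0
      have h6 := (mul_eq_zero.mp h5).resolve_left hnn
      linarith
    have hz := nondegA hn b g hgb hgnd g hgA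
    obtain ⟨x, y, hxy⟩ := g_nontriv hn b g hgnd
    exact hxy (hz x y)

end AuxProofs

theorem stmt9 {V : Type*} [AddCommGroup V] [Module ℝ V]
    (n : ℕ) (hn : 3 ≤ n) (b : Module.Basis (Fin n) ℝ V)
    (g : V → V → ℝ) (hgb : IsBilin g) (hgs : ∀ x y, g x y = g y x)
    (hgnd : ∀ x : V, (∀ y : V, g x y = 0) → x = 0) :
    ∀ F ∈ rSet V,
      (pi1 n b g F = 0 ↔ tau n b g F = 0) ∧
      (pi2 n b g F = 0 ↔ symB (Ric n b g F) = ((tau n b g F) / (n : ℝ)) • g) ∧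
      (pi3 n b g F = 0 ↔ ∀ x y, Ric n b g F x y = Ric n b g F y x) ∧
      (pi4 n b g F = 0 ↔
        lamB (RicS n b g F + ((3 : ℝ) / ((n : ℝ) + 1)) • Ric n b g F) = 0) ∧
      (pi5 n b g F = 0 ↔
        symB (((1 : ℝ) / ((n : ℝ) - 1)) • Ric n b g F + RicS n b g F)
          = ((tau n b g F) / ((n : ℝ) - 1)) • g) := by
  intro F hF
  obtain ⟨hFm, -, -⟩ := hF
  have hn3 : (3:ℝ) ≤ (n:ℝ) := by exact_mod_cast hn
  have hnn : (n:ℝ) ≠ 0 := by linarith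
  have hn1 : (n:ℝ) - 1 ≠ 0 := by linarith
  have hn2 : (n:ℝ) - 2 ≠ 0 := by linarith
  have hp1 : (n:ℝ) + 1 ≠ 0 := by linarith
  have h24 : ((n:ℝ)^2 - 4) ≠ 0 := by nlinarith
  have hgnt := g_nontriv hn b g hgnd
  have hF01 : ∀ y z w, F 0 y z w = 0 := fun y z w => isLin_zero (hFm.1 y z w)
  have hF02 : ∀ x z w, F x 0 z w = 0 := fun x z w => isLin_zero (hFm.2.1 x z w)
  have hF03 : ∀ x y w, F x y 0 w = 0 := fun x y w => isLin_zero (hFm.2.2.1 x y w)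
  have hF04 : ∀ x y z, F x y z 0 = 0 := fun x y z => isLin_zero (hFm.2.2.2 x y z)
  have hRic0r : ∀ x, Ric n b g F x 0 = 0 := by
    intro x; unfold Ric
    refine Finset.sum_eq_zero fun i _ => Finset.sum_eq_zero fun j _ => ?_
    rw [hF03, mul_zero]
  have hRic0l : ∀ x, Ric n b g F 0 x = 0 := by
    intro x; unfold Ric
    refine Finset.sum_eq_zero fun i _ => Finset.sum_eq_zero fun j _ => ?_
    rw [hF02, mul_zero]
  have hRS0r : ∀ x, RicS n b g F x 0 = 0 := by
    intro x; unfold RicS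
    refine Finset.sum_eq_zero fun i _ => Finset.sum_eq_zero fun j _ => ?_
    rw [hF04, mul_zero]
  have hRS0l : ∀ x, RicS n b g F 0 x = 0 := by
    intro x; unfold RicS
    refine Finset.sum_eq_zero fun i _ => Finset.sum_eq_zero fun j _ => ?_
    rw [hF01, mul_zero]
  refine ⟨?_, ?_, ?_, ?_, ?_⟩
  · -- part 1
    have hval : ∀ x y z w, ((n:ℝ) * ((n:ℝ)-1)) * pi1 n b g F x y z w
        = -(tau n b g F) * (g x z * g y w - g y z * g x w) := by
      intro x y z w
      simp only [pi1, wedge, Pi.smul_apply, smul_eq_mul]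
      field_simp
      ring
    constructor
    · intro h
      by_cases hc : tau n b g F = 0
      · exact hc
      exfalso
      have hW : ∀ x y z w, g x z * g y w = g y z * g x w := by
        intro x y z w
        have h0 := hval x y z w
        rw [congrFun (congrFun (congrFun (congrFun h x) y) z) w] at h0
        simp only [Pi.zero_apply, mul_zero] at h0
        have h1 := (mul_eq_zero.mp h0.symm).resolve_left (neg_ne_zero.mpr hc)
        linarith
      have hz := nondegA hn b g hgb hgnd g hW
      obtain ⟨x, y, hxy⟩ := hgnt
      exact hxy (hz x y)
    · intro h
      funext x y z w
      have h0 := hval x y z w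
      rw [h] at h0
      simp only [neg_zero, zero_mul] at h0
      have := (mul_eq_zero.mp h0).resolve_left (mul_ne_zero hnn hn1)
      simpa using this
  · -- part 2
    have hval : ∀ x y z w, ((n:ℝ) * ((n:ℝ)-1)) * pi2 n b g F x y z w
        = (tau n b g F * g x z - (n:ℝ) * symB (Ric n b g F) x z) * g y w
          - (tau n b g F * g y z - (n:ℝ) * symB (Ric n b g F) y z) * g x w := by
      intro x y z w
      simp only [pi2, wedge, Pi.smul_apply, Pi.sub_apply, smul_eq_mul]
      field_simp
      ring
    constructor
    · intro h
      have hpt : ∀ x y z w,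
          (tau n b g F * g x z - (n:ℝ) * symB (Ric n b g F) x z) * g y w
            = (tau n b g F * g y z - (n:ℝ) * symB (Ric n b g F) y z) * g x w := by
        intro x y z w
        have h0 := hval x y z w
        rw [congrFun (congrFun (congrFun (congrFun h x) y) z) w] at h0
        simp only [Pi.zero_apply, mul_zero] at h0
        linarith
      have hz := nondegA hn b g hgb hgnd
        (fun u v => tau n b g F * g u v - (n:ℝ) * symB (Ric n b g F) u v) hpt
      funext u v
      have h5 : tau n b g F * g u v - (n:ℝ) * symB (Ric n b g F) u v = 0 := hz u v
      simp only [Pi.smul_apply, smul_eq_mul]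
      field_simp
      linarith
    · intro h
      have h5 : ∀ u v, symB (Ric n b g F) u v = tau n b g F / (n:ℝ) * g u v := by
        intro u v
        have := congrFun (congrFun h u) v
        simpa using this
      funext x y z w
      have h0 := hval x y z w
      rw [h5 x z, h5 y z] at h0
      have h1 : ((n:ℝ) * ((n:ℝ)-1)) * pi2 n b g F x y z w = 0 := by
        rw [h0]; field_simp; ring
      have := (mul_eq_zero.mp h1).resolve_left (mul_ne_zero hnn hn1)
      simpa using this
  · -- part 3
    have hval : ∀ x y z w, (-((n:ℝ)+1)) * pi3 n b g F x y z w
        = 2 * lamB (Ric n b g F) x y * g z w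
          + lamB (Ric n b g F) x z * g y w - lamB (Ric n b g F) y z * g x w := by
      intro x y z w
      simp only [pi3, prodB, wedge, Pi.add_apply, Pi.smul_apply, smul_eq_mul]
      field_simp
      ring
    have hLRd : ∀ u, lamB (Ric n b g F) u u = 0 := fun u => by simp [lamB]
    have hLR0 : ∀ x, lamB (Ric n b g F) x 0 = 0 := fun x => by
      simp [lamB, hRic0r, hRic0l]
    constructor
    · intro h
      have hgz : ∀ x z w, lamB (Ric n b g F) x z * g z w = 0 := by
        intro x z w
        have h1 := hval x z z w
        rw [congrFun (congrFun (congrFun (congrFun h x) z) z) w] at h1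
        rw [hLRd z] at h1
        simp only [Pi.zero_apply, mul_zero] at h1
        linarith
      have hz := nondegB g hgnd (lamB (Ric n b g F)) hLR0 hgz
      intro x y
      have h6 : (Ric n b g F x y - Ric n b g F y x) / 2 = 0 := hz x y
      linarith
    · intro h
      have hLz : ∀ u v, lamB (Ric n b g F) u v = 0 := by
        intro u v
        show (Ric n b g F u v - Ric n b g F v u) / 2 = 0
        rw [h u v]; ring
      funext x y z w
      have h0 := hval x y z w
      rw [hLz x y, hLz x z, hLz y z] at h0
      have h1 : (-((n:ℝ)+1)) * pi3 n b g F x y z w = 0 := by rw [h0]; ring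
      have := (mul_eq_zero.mp h1).resolve_left (neg_ne_zero.mpr hp1)
      simpa using this
  · -- part 4
    have hval : ∀ x y z w, (-(((n:ℝ)^2-4) * ((n:ℝ)+1))) * pi4 n b g F x y z w
        = 2 * (((n:ℝ)+1) * lamB (RicS n b g F) x y + 3 * lamB (Ric n b g F) x y) * g z w
          + (((n:ℝ)+1) * lamB (RicS n b g F) x z + 3 * lamB (Ric n b g F) x z) * g y w
          - (((n:ℝ)+1) * lamB (RicS n b g F) y z + 3 * lamB (Ric n b g F) y z) * g x w
          - ((n:ℝ)+1) * ((((n:ℝ)+1) * lamB (RicS n b g F) x w + 3 * lamB (Ric n b g F) x w) * g y z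
              - (((n:ℝ)+1) * lamB (RicS n b g F) y w + 3 * lamB (Ric n b g F) y w) * g x z) := by
      intro x y z w
      simp only [pi4, prodB, wedge, Pi.add_apply, Pi.sub_apply, Pi.smul_apply, smul_eq_mul]
      field_simp
      ring
    constructor
    · intro h
      have hO : ∀ x y z w,
          2 * (((n:ℝ)+1) * lamB (RicS n b g F) x y + 3 * lamB (Ric n b g F) x y) * g z w
            + (((n:ℝ)+1) * lamB (RicS n b g F) x z + 3 * lamB (Ric n b g F) x z) * g y w
            - (((n:ℝ)+1) * lamB (RicS n b g F) y z + 3 * lamB (Ric n b g F) y z) * g x w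
            - ((n:ℝ)+1) * ((((n:ℝ)+1) * lamB (RicS n b g F) x w + 3 * lamB (Ric n b g F) x w) * g y z
                - (((n:ℝ)+1) * lamB (RicS n b g F) y w + 3 * lamB (Ric n b g F) y w) * g x z) = 0 := by
        intro x y z w
        have h0 := hval x y z w
        rw [congrFun (congrFun (congrFun (congrFun h x) y) z) w] at h0
        simp only [Pi.zero_apply, mul_zero] at h0
        linarith
      have hz := core4 hn b g hgs hgnd
        (fun u v => ((n:ℝ)+1) * lamB (RicS n b g F) u v + 3 * lamB (Ric n b g F) u v)
        (fun u => by simp [lamB])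
        (fun x => by simp [lamB, hRic0r, hRic0l, hRS0r, hRS0l])
        hO
      funext u v
      have h7 : ((n:ℝ)+1) * lamB (RicS n b g F) u v + 3 * lamB (Ric n b g F) u v = 0 := hz u v
      simp only [lamB, Pi.add_apply, Pi.smul_apply, smul_eq_mul, Pi.zero_apply] at h7 ⊢
      field_simp
      linarith
    · intro h
      have h8 : ∀ u v, lamB (RicS n b g F) u v
          = (-3/((n:ℝ)+1)) * lamB (Ric n b g F) u v := by
        intro u v
        have h9 := congrFun (congrFun h u) v
        simp only [lamB, Pi.add_apply, Pi.smul_apply, smul_eq_mul, Pi.zero_apply] at h9 ⊢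
        field_simp at h9 ⊢
        linarith
      funext x y z w
      have h0 := hval x y z w
      rw [h8 x y, h8 x z, h8 y z, h8 x w, h8 y w] at h0
      have h1 : (-(((n:ℝ)^2-4) * ((n:ℝ)+1))) * pi4 n b g F x y z w = 0 := by
        rw [h0]; field_simp; ring
      have h2ne : (-(((n:ℝ)^2-4) * ((n:ℝ)+1))) ≠ 0 :=
        neg_ne_zero.mpr (mul_ne_zero h24 hp1)
      have := (mul_eq_zero.mp h1).resolve_left h2ne
      simpa using this
  · -- part 5
    have hval : ∀ x y z w, ((n:ℝ) * ((n:ℝ)-1) * ((n:ℝ)-2)) * pi5 n b g F x y z w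
        = (tau n b g F * g x z - symB (Ric n b g F + ((n:ℝ)-1) • RicS n b g F) x z) * g y w
          - (tau n b g F * g y z - symB (Ric n b g F + ((n:ℝ)-1) • RicS n b g F) y z) * g x w
          - ((n:ℝ)-1) *
            ((tau n b g F * g x w - symB (Ric n b g F + ((n:ℝ)-1) • RicS n b g F) x w) * g y z
              - (tau n b g F * g y w - symB (Ric n b g F + ((n:ℝ)-1) • RicS n b g F) y w) * g x z) := by
      intro x y z w
      simp only [pi5, wedge, Pi.smul_apply, Pi.sub_apply, smul_eq_mul]
      field_simp
      ring
    constructor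
    · intro h
      have hks : ∀ u v,
          tau n b g F * g u v - symB (Ric n b g F + ((n:ℝ)-1) • RicS n b g F) u v
          = tau n b g F * g v u - symB (Ric n b g F + ((n:ℝ)-1) • RicS n b g F) v u := by
        intro u v
        simp only [symB, Pi.add_apply, Pi.smul_apply, smul_eq_mul]
        rw [hgs u v]
        ring
      have hO : ∀ x y z w,
          (tau n b g F * g x z - symB (Ric n b g F + ((n:ℝ)-1) • RicS n b g F) x z) * g y w
            - (tau n b g F * g y z - symB (Ric n b g F + ((n:ℝ)-1) • RicS n b g F) y z) * g x w
            - ((n:ℝ)-1) *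
              ((tau n b g F * g x w - symB (Ric n b g F + ((n:ℝ)-1) • RicS n b g F) x w) * g y z
                - (tau n b g F * g y w - symB (Ric n b g F + ((n:ℝ)-1) • RicS n b g F) y w) * g x z) = 0 := by
        intro x y z w
        have h0 := hval x y z w
        rw [congrFun (congrFun (congrFun (congrFun h x) y) z) w] at h0
        simp only [Pi.zero_apply, mul_zero] at h0
        linarith
      have hz := core5 hn b g hgb hgs hgnd
        (fun u v => tau n b g F * g u v - symB (Ric n b g F + ((n:ℝ)-1) • RicS n b g F) u v)
        hks hO
      funext u v
      have h7 : tau n b g F * g u v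
          - symB (Ric n b g F + ((n:ℝ)-1) • RicS n b g F) u v = 0 := hz u v
      simp only [symB, Pi.add_apply, Pi.smul_apply, smul_eq_mul, Pi.zero_apply] at h7 ⊢
      field_simp
      linear_combination (-2) * h7
    · intro h
      have h10 : ∀ u v, symB (Ric n b g F + ((n:ℝ)-1) • RicS n b g F) u v
          = tau n b g F * g u v := by
        intro u v
        have h9 := congrFun (congrFun h u) v
        simp only [symB, Pi.add_apply, Pi.smul_apply, smul_eq_mul, Pi.zero_apply] at h9 ⊢
        field_simp at h9 ⊢
        have key : (Ric n b g F u v + ((n:ℝ) - 1) * RicS n b g F u v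
            + (Ric n b g F v u + ((n:ℝ) - 1) * RicS n b g F v u)
            - tau n b g F * g u v * 2) * ((n:ℝ) - 1) = 0 := by
          linear_combination ((n:ℝ) - 1) * h9
        have hkey := (mul_eq_zero.mp key).resolve_right hn1
        linarith
      funext x y z w
      have h0 := hval x y z w
      rw [h10 x z, h10 y z, h10 x w, h10 y w] at h0
      have h1 : ((n:ℝ) * ((n:ℝ)-1) * ((n:ℝ)-2)) * pi5 n b g F x y z w = 0 := by
        rw [h0]; ring
      have h2ne : ((n:ℝ) * ((n:ℝ)-1) * ((n:ℝ)-2)) ≠ 0 :=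
        mul_ne_zero (mul_ne_zero hnn hn1) hn2
      have := (mul_eq_zero.mp h1).resolve_left h2ne
      simpa using this

end GCT
end

section
/- Let R ∈ 𝔣(V,g). Then: (1) p(R) = R + (1/(n−1))(Ric ∧ g), where Ric := Ric(R); (2) if additionally R* ∈ 𝔯(V), then p(R) = π₅(R) + π₆(R) + π₇(R), and the following three conditions are equivalent: (a) p(R*) = p(R); (b) R* = R; (c) R ∈ 𝔞(V); (3) if additionally R* ∈ 𝔯(V) and p(R*) = 0, then B* := S[Ric*(R) + (n−1)Ric(R)] − τ(R)·g = 0. -/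
open scoped BigOperators
open Pointwise

namespace GCT

variable {V : Type*} [AddCommGroup V] [Module ℝ V]

variable (n : ℕ) (b : Module.Basis (Fin n) ℝ V) (g : V → V → ℝ)

section Aux
variable {V : Type*} [AddCommGroup V] [Module ℝ V]

lemma IsLin.map_zero' {u : V → ℝ} (hu : IsLin u) : u 0 = 0 := by
  have := hu.2 0 0; simpa using this

lemma IsLin.map_sum' {u : V → ℝ} (hu : IsLin u) {ι : Type*} (s : Finset ι)
    (c : ι → ℝ) (v : ι → V) :
    u (∑ i ∈ s, c i • v i) = ∑ i ∈ s, c i * u (v i) := by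
  classical
  induction s using Finset.induction with
  | empty => simpa using hu.map_zero'
  | insert a s h ih => rw [Finset.sum_insert h, hu.1, hu.2, ih, Finset.sum_insert h]

variable (n : ℕ) (b : Module.Basis (Fin n) ℝ V) (g : V → V → ℝ)

/-- The Gram matrix. -/
noncomputable def Gmat : Matrix (Fin n) (Fin n) ℝ := Matrix.of fun i j => g (b i) (b j)

lemma Gmat_det_ne (hgb : IsBilin g) (hgs : ∀ x y, g x y = g y x)
    (hgnd : ∀ x : V, (∀ y : V, g x y = 0) → x = 0) : (Gmat n b g).det ≠ 0 := by
  intro hdet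
  obtain ⟨v, hv, hv0⟩ := (Matrix.exists_mulVec_eq_zero_iff).2 hdet
  set x : V := ∑ j, v j • b j with hx
  have hbx : ∀ i, g (b i) x = 0 := by
    intro i
    have h1 : g (b i) x = ∑ j, v j * g (b i) (b j) :=
      (hgb.2 (b i)).map_sum' Finset.univ v (fun j => b j)
    have h2 := congrFun hv0 i
    simp only [Matrix.mulVec, dotProduct, Pi.zero_apply] at h2
    rw [h1, ← h2]
    exact Finset.sum_congr rfl fun j _ => by rw [mul_comm]; rfl
  have hxy : ∀ y, g x y = 0 := by
    intro y
    rw [hgs]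
    have hyr : y = ∑ i, b.repr y i • b i := (b.sum_repr y).symm
    rw [hyr, (hgb.1 x).map_sum' Finset.univ _ (fun i => b i)]
    simp [hbx]
  have hx0 : x = 0 := hgnd x hxy
  have := Fintype.linearIndependent_iff.1 b.linearIndependent v (by rw [← hx]; exact hx0)
  exact hv (funext this)

variable (hgb : IsBilin g) (hgs : ∀ x y, g x y = g y x)
    (hgnd : ∀ x : V, (∀ y : V, g x y = 0) → x = 0)

include hgb hgs hgnd in
lemma ginv_mul_G : ginv n b g * Gmat n b g = 1 :=
  Matrix.nonsing_inv_mul _ (isUnit_iff_ne_zero.2 (Gmat_det_ne n b g hgb hgs hgnd))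

include hgb hgs hgnd in
lemma G_mul_ginv : Gmat n b g * ginv n b g = 1 :=
  Matrix.mul_nonsing_inv _ (isUnit_iff_ne_zero.2 (Gmat_det_ne n b g hgb hgs hgnd))

include hgs in
lemma ginv_symm (i j : Fin n) : ginv n b g i j = ginv n b g j i := by
  have hGt : Matrix.transpose (Gmat n b g) = Gmat n b g := by
    ext i j
    show g (b j) (b i) = g (b i) (b j)
    exact hgs _ _
  have h2 : Matrix.transpose (ginv n b g) = ginv n b g := by
    show Matrix.transpose ((Gmat n b g)⁻¹) = (Gmat n b g)⁻¹
    rw [Matrix.transpose_nonsing_inv, hGt]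
  have h3 := congrFun (congrFun h2 i) j
  rw [Matrix.transpose_apply] at h3
  exact h3.symm

include hgb hgs hgnd in
lemma ginv_contract_G (j k : Fin n) :
    ∑ i, ginv n b g i j * g (b i) (b k) = if j = k then (1:ℝ) else 0 := by
  have h := congrFun (congrFun (ginv_mul_G n b g hgb hgs hgnd) j) k
  rw [Matrix.mul_apply, Matrix.one_apply] at h
  rw [← h]
  exact Finset.sum_congr rfl fun i _ => by
    rw [ginv_symm n b g hgs i j]; rfl

include hgb hgs hgnd in
lemma gcol (y : V) (j : Fin n) :
    ∑ i, ginv n b g i j * g (b i) y = b.repr y j := by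
  have hrep : ∀ i : Fin n, g (b i) y = ∑ k, b.repr y k * g (b i) (b k) := fun i => by
    conv_lhs => rw [← b.sum_repr y]
    exact (hgb.2 (b i)).map_sum' _ _ _
  calc ∑ i, ginv n b g i j * g (b i) y
      = ∑ i, ∑ k, b.repr y k * (ginv n b g i j * g (b i) (b k)) := by
        refine Finset.sum_congr rfl fun i _ => ?_
        rw [hrep i, Finset.mul_sum]
        exact Finset.sum_congr rfl fun k _ => by ring
    _ = ∑ k, ∑ i, b.repr y k * (ginv n b g i j * g (b i) (b k)) := Finset.sum_comm
    _ = ∑ k, b.repr y k * ∑ i, ginv n b g i j * g (b i) (b k) := by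
        exact Finset.sum_congr rfl fun k _ => (Finset.mul_sum _ _ _).symm
    _ = ∑ k, b.repr y k * (if j = k then (1:ℝ) else 0) := by
        exact Finset.sum_congr rfl fun k _ => by
          rw [ginv_contract_G n b g hgb hgs hgnd j k]
    _ = b.repr y j := by simp

include hgb hgs hgnd in
lemma contract1 {u : V → ℝ} (hu : IsLin u) (y : V) :
    ∑ i, ∑ j, ginv n b g i j * (g (b i) y * u (b j)) = u y := by
  calc ∑ i, ∑ j, ginv n b g i j * (g (b i) y * u (b j))
      = ∑ j, ∑ i, ginv n b g i j * (g (b i) y * u (b j)) := Finset.sum_comm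
    _ = ∑ j, (∑ i, ginv n b g i j * g (b i) y) * u (b j) := by
        refine Finset.sum_congr rfl fun j _ => ?_
        rw [Finset.sum_mul]
        exact Finset.sum_congr rfl fun i _ => by ring
    _ = ∑ j, b.repr y j * u (b j) := by
        refine Finset.sum_congr rfl fun j _ => ?_
        rw [gcol n b g hgb hgs hgnd y j]
    _ = u y := by rw [← hu.map_sum' Finset.univ _ (fun j => b j), b.sum_repr]

include hgb hgs hgnd in
lemma trace_g : ∑ i, ∑ j, ginv n b g i j * g (b i) (b j) = (n : ℝ) := by
  calc ∑ i, ∑ j, ginv n b g i j * g (b i) (b j)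
      = ∑ i, ∑ j, ginv n b g i j * Gmat n b g j i := by
        refine Finset.sum_congr rfl fun i _ => Finset.sum_congr rfl fun j _ => ?_
        rw [show Gmat n b g j i = g (b j) (b i) from rfl, hgs]
    _ = ∑ i, (ginv n b g * Gmat n b g) i i := by
        exact Finset.sum_congr rfl fun i _ => (Matrix.mul_apply).symm
    _ = ∑ i : Fin n, (1 : Matrix (Fin n) (Fin n) ℝ) i i := by
        rw [ginv_mul_G n b g hgb hgs hgnd]
    _ = (n : ℝ) := by simp [Matrix.one_apply]


lemma sum2_congr {f h : Fin n → Fin n → ℝ} (e : ∀ i j, f i j = h i j) :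
    ∑ i, ∑ j, f i j = ∑ i, ∑ j, h i j :=
  Finset.sum_congr rfl fun i _ => Finset.sum_congr rfl fun j _ => e i j

lemma sum2_add (f h : Fin n → Fin n → ℝ) :
    ∑ i, ∑ j, (f i j + h i j) = (∑ i, ∑ j, f i j) + ∑ i, ∑ j, h i j := by
  simp [Finset.sum_add_distrib]

lemma sum2_neg (f : Fin n → Fin n → ℝ) :
    ∑ i, ∑ j, (-(f i j)) = -(∑ i, ∑ j, f i j) := by simp

lemma sum2_smul (r : ℝ) (f : Fin n → Fin n → ℝ) :
    ∑ i, ∑ j, r * f i j = r * ∑ i, ∑ j, f i j := by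
  simp [Finset.mul_sum]

lemma isLin_dsum {H : Fin n → Fin n → V → ℝ} (h : ∀ i j, IsLin (H i j))
    (cf : Fin n → Fin n → ℝ) : IsLin (fun t => ∑ i, ∑ j, cf i j * H i j t) := by
  constructor
  · intro t s
    simp only
    rw [← sum2_add n]
    exact sum2_congr n fun i j => by rw [(h i j).1]; ring
  · intro r t
    simp only
    rw [← sum2_smul n]
    exact sum2_congr n fun i j => by rw [(h i j).2]; ring

lemma tau_eq_trace (F : V → V → V → V → ℝ) :
    tau n b g F = ∑ j, ∑ k, ginv n b g j k * Ric n b g F (b j) (b k) := by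
  calc tau n b g F
      = ∑ i, ∑ j, ∑ k, ∑ l,
          ginv n b g i l * ginv n b g j k * F (b i) (b j) (b k) (b l) := rfl
    _ = ∑ j, ∑ i, ∑ k, ∑ l,
          ginv n b g i l * ginv n b g j k * F (b i) (b j) (b k) (b l) := Finset.sum_comm
    _ = ∑ j, ∑ k, ∑ i, ∑ l,
          ginv n b g i l * ginv n b g j k * F (b i) (b j) (b k) (b l) :=
        Finset.sum_congr rfl fun j _ => Finset.sum_comm
    _ = ∑ j, ∑ k, ginv n b g j k * Ric n b g F (b j) (b k) := by
        refine Finset.sum_congr rfl fun j _ => Finset.sum_congr rfl fun k _ => ?_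
        show _ = ginv n b g j k * ∑ i, ∑ l, ginv n b g i l * F (b i) (b j) (b k) (b l)
        rw [Finset.mul_sum]
        refine Finset.sum_congr rfl fun i _ => ?_
        rw [Finset.mul_sum]
        exact Finset.sum_congr rfl fun l _ => by ring

lemma idC (nr t Rxz Ryz Rxw Ryw Sxz Syz Sxw Syw gxz gyz gxw gyw : ℝ)
    (h0 : nr ≠ 0) (h1 : nr - 1 ≠ 0) (h2 : nr - 2 ≠ 0) :
    (1/(nr-1)) * (Rxz*gyw - Ryz*gxw)
    = (1/((nr-1)*(nr-2))) * ( t*(gxz*gyw - gyz*gxw)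
        - (1/nr) * ( (Rxz+(nr-1)*Sxz)*gyw - (Ryz+(nr-1)*Syz)*gxw
            - (nr-1)*((Rxw+(nr-1)*Sxw)*gyz - (Ryw+(nr-1)*Syw)*gxz) ) )
      + (1/(2*(nr-2))) * ( (Rxz+Sxz)*gyw - (Ryz+Syz)*gxw
            - ((Rxw+Sxw)*gyz - (Ryw+Syw)*gxz) )
      - (t/((nr-1)*(nr-2))) * (gxz*gyw - gyz*gxw)
      + (1/(2*nr)) * ( (Rxz-Sxz)*gyw - (Ryz-Syz)*gxw
            + ((Rxw-Sxw)*gyz - (Ryw-Syw)*gxz) ) := by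
  field_simp
  ring

end Aux

theorem stmt10 {V : Type*} [AddCommGroup V] [Module ℝ V]
    (n : ℕ) (hn : 3 ≤ n) (b : Module.Basis (Fin n) ℝ V)
    (g : V → V → ℝ) (hgb : IsBilin g) (hgs : ∀ x y, g x y = g y x)
    (hgnd : ∀ x : V, (∀ y : V, g x y = 0) → x = 0) :
    ∀ F ∈ rSet V, (∀ x y, Ric n b g F x y = Ric n b g F y x) →
      pProj n b g F = F + ((1 : ℝ) / ((n : ℝ) - 1)) • wedge 0 (Ric n b g F) g ∧
      (conj F ∈ rSet V →
        (pProj n b g F = pi5 n b g F + pi6 n b g F + pi7 n b g F) ∧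
        (pProj n b g (conj F) = pProj n b g F ↔ conj F = F) ∧
        (conj F = F ↔ F ∈ aSet V)) ∧
      (conj F ∈ rSet V → pProj n b g (conj F) = 0 →
        symB (RicS n b g F + ((n : ℝ) - 1) • Ric n b g F) - (tau n b g F) • g = 0) := by
  intro F hF hric
  obtain ⟨hFm, hFa, hFb⟩ := hF
  have h3n : (3:ℝ) ≤ (n:ℝ) := by exact_mod_cast hn
  have hn0 : (n:ℝ) ≠ 0 := ne_of_gt (by linarith)
  have hn1 : (n:ℝ) - 1 ≠ 0 := ne_of_gt (by linarith)
  have hn2 : (n:ℝ) - 2 ≠ 0 := ne_of_gt (by linarith)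
  have hn3 : (n:ℝ) + 1 ≠ 0 := ne_of_gt (by linarith)
  have hn4 : (n:ℝ) + 2 ≠ 0 := ne_of_gt (by linarith)
  -- Part 1, in general form
  have part1 : ∀ F' : V → V → V → V → ℝ,
      (∀ x y, Ric n b g F' x y = Ric n b g F' y x) →
      pProj n b g F' = F' + ((1:ℝ)/((n:ℝ)-1)) • wedge 0 (Ric n b g F') g := by
    intro F' h
    funext x y z w
    simp only [pProj, pi1, pi2, pi3, wedge, prodB, lamB, symB, Pi.add_apply,
      Pi.sub_apply, Pi.smul_apply, smul_eq_mul, zero_mul, sub_zero, mul_zero]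
    rw [h z x, h z y, h y x]
    field_simp
    ring
  refine ⟨part1 F hric, ?_, ?_⟩
  · intro hconj
    obtain ⟨hCm, hCa, hCb⟩ := hconj
    have hB2 : ∀ x y z w : V, F x y w z + F y z w x + F z x w y = 0 := by
      intro x y z w
      have h := hCb x y z w
      simp only [conj] at h
      linarith
    -- the (3,4)-trace of F vanishes
    have hE : ∀ y z : V, (∑ i, ∑ j, ginv n b g i j * F y z (b i) (b j)) = 0 := by
      intro y z
      have esum : (∑ i, ∑ j, ((ginv n b g i j * F (b i) y z (b j) +
          ginv n b g i j * F y z (b i) (b j)) + ginv n b g i j * F z (b i) y (b j))) = 0 := by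
        rw [sum2_congr n (h := fun _ _ => (0:ℝ)) (fun i j => by
          have h := hFb (b i) y z (b j)
          linear_combination (ginv n b g i j) * h)]
        simp
      rw [sum2_add n _ _, sum2_add n _ _] at esum
      have e1 : (∑ i, ∑ j, ginv n b g i j * F (b i) y z (b j)) = Ric n b g F y z := rfl
      have e3 : (∑ i, ∑ j, ginv n b g i j * F z (b i) y (b j)) = - Ric n b g F z y := by
        rw [sum2_congr n (h := fun i j => -(ginv n b g i j * F (b i) z y (b j)))
          (fun i j => by rw [hFa z (b i) y (b j)]; ring), sum2_neg n]
        rfl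
      rw [e1, e3] at esum
      have e4 := hric y z
      linarith
    -- Ric* is symmetric
    have hrs : ∀ x y : V, RicS n b g F x y = RicS n b g F y x := by
      intro y z
      have esum : (∑ i, ∑ j, ((ginv n b g i j * F (b i) y (b j) z +
          ginv n b g i j * F y z (b j) (b i)) + ginv n b g i j * F z (b i) (b j) y)) = 0 := by
        rw [sum2_congr n (h := fun _ _ => (0:ℝ)) (fun i j => by
          have h := hB2 (b i) y z (b j)
          linear_combination (ginv n b g i j) * h)]
        simp
      rw [sum2_add n _ _, sum2_add n _ _] at esum
      have e1 : (∑ i, ∑ j, ginv n b g i j * F (b i) y (b j) z)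
          = - RicS n b g F y z := by
        rw [sum2_congr n (h := fun i j => -(ginv n b g i j * F y (b i) (b j) z))
          (fun i j => by rw [hFa (b i) y (b j) z]; ring), sum2_neg n]
        rfl
      have e2 : (∑ i, ∑ j, ginv n b g i j * F y z (b j) (b i)) = 0 := by
        calc ∑ i, ∑ j, ginv n b g i j * F y z (b j) (b i)
            = ∑ i, ∑ j, ginv n b g j i * F y z (b j) (b i) :=
              sum2_congr n fun i j => by rw [ginv_symm n b g hgs i j]
          _ = ∑ j, ∑ i, ginv n b g j i * F y z (b j) (b i) := Finset.sum_comm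
          _ = 0 := hE y z
      have e3 : (∑ i, ∑ j, ginv n b g i j * F z (b i) (b j) y)
          = RicS n b g F z y := rfl
      rw [e1, e2, e3] at esum
      linarith
    -- Ric of the conjugate is Ric*
    have hRicC : Ric n b g (conj F) = RicS n b g F := by
      funext x y
      show (∑ i, ∑ j, ginv n b g i j * conj F (b i) x y (b j))
          = ∑ i, ∑ j, ginv n b g i j * F x (b i) (b j) y
      refine sum2_congr n fun i j => ?_
      simp only [conj]
      rw [hFa x (b i) (b j) y]
    -- part 1 for the conjugate
    have h1c : pProj n b g (conj F) =
        conj F + ((1:ℝ)/((n:ℝ)-1)) • wedge 0 (RicS n b g F) g := by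
      rw [part1 (conj F) (by rw [hRicC]; exact hrs), hRicC]
    -- F = psi F + mu F pointwise
    have hpm : ∀ x y z w : V, F x y z w =
        (F x y z w + F y x w z + F z w x y + F w z y x) / 4 +
        (3 * F x y z w + 3 * F x y w z + F x w z y + F x z w y + F w y z x
          + F z y w x) / 8 := by
      intro x y z w
      linear_combination (3/8) * hFa x y z w - (1/4) * hB2 x y z w
        - (1/8) * hFa x y w z + (1/4) * hFa x z y w - (1/8) * hB2 x z y w
        + (1/4) * hFa x z w y - (1/4) * hFb x z w y - (1/4) * hB2 x z w y
        + (1/4) * hFa x w y z - (3/8) * hB2 x w y z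
        + (1/4) * hFa x w z y - (1/4) * hB2 x w z y + (1/4) * hFb y z w x
    refine ⟨?_, ?_, ?_⟩
    · -- p(R) = π₅ + π₆ + π₇
      rw [part1 F hric]
      funext x y z w
      simp only [pi5, pi6, pi7, psi, mu, wedge, prodB, lamB, symB, Pi.add_apply,
        Pi.sub_apply, Pi.smul_apply, smul_eq_mul, zero_mul, sub_zero, mul_zero]
      rw [hric z x, hric w x, hric z y, hric w y, hric y x,
        hrs z x, hrs w x, hrs z y, hrs w y, hrs y x]
      linear_combination (hpm x y z w) + idC (n:ℝ) (tau n b g F)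
        (Ric n b g F x z) (Ric n b g F y z) (Ric n b g F x w) (Ric n b g F y w)
        (RicS n b g F x z) (RicS n b g F y z) (RicS n b g F x w) (RicS n b g F y w)
        (g x z) (g y z) (g x w) (g y w) hn0 hn1 hn2
    · -- p(R*) = p(R) ↔ R* = R
      constructor
      · intro hpp
        rw [h1c, part1 F hric] at hpp
        have hcval : ((1:ℝ)/((n:ℝ)-1)) * ((n:ℝ)-1) = 1 := by field_simp
        set c : ℝ := (1:ℝ)/((n:ℝ)-1) with hc
        set tR : ℝ := ∑ i, ∑ j, ginv n b g i j * Ric n b g F (b i) (b j) with htR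
        set tS : ℝ := ∑ i, ∑ j, ginv n b g i j * RicS n b g F (b i) (b j) with htS
        have huS : ∀ x : V, IsLin (fun t => RicS n b g F x t) := fun x =>
          isLin_dsum n (fun i j => hFm.2.2.2 x (b i) (b j)) _
        have huR : ∀ x : V, IsLin (fun t => Ric n b g F x t) := fun x =>
          isLin_dsum n (fun i j => hFm.2.2.1 (b i) x (b j)) _
        have hmain : ∀ x y : V,
            Ric n b g F x y + c * RicS n b g F x y + (-(c * g x y)) * tS
            = RicS n b g F x y + c * Ric n b g F x y + (-(c * g x y)) * tR := by
          intro x y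
          have esum : (∑ i, ∑ j, ginv n b g i j *
                ((conj F + c • wedge 0 (RicS n b g F) g) x (b i) (b j) y))
              = ∑ i, ∑ j, ginv n b g i j *
                ((F + c • wedge 0 (Ric n b g F) g) x (b i) (b j) y) :=
            sum2_congr n fun i j => by rw [hpp]
          have eL : (∑ i, ∑ j, ginv n b g i j *
                ((conj F + c • wedge 0 (RicS n b g F) g) x (b i) (b j) y))
              = Ric n b g F x y + c * RicS n b g F x y + (-(c * g x y)) * tS := by
            rw [sum2_congr n (h := fun i j =>
                ginv n b g i j * F (b i) x y (b j)
                + c * (ginv n b g i j * (g (b i) y * RicS n b g F x (b j)))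
                + (-(c * g x y)) * (ginv n b g i j * RicS n b g F (b i) (b j)))
              (fun i j => by
                simp only [Pi.add_apply, Pi.smul_apply, smul_eq_mul, wedge, conj]
                rw [hFa x (b i) y (b j)]
                ring)]
            rw [sum2_add n _ _, sum2_add n _ _, sum2_smul n c _,
              sum2_smul n (-(c * g x y)) _, ← htS,
              contract1 n b g hgb hgs hgnd (huS x) y]
            rfl
          have eR : (∑ i, ∑ j, ginv n b g i j *
                ((F + c • wedge 0 (Ric n b g F) g) x (b i) (b j) y))
              = RicS n b g F x y + c * Ric n b g F x y + (-(c * g x y)) * tR := by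
            rw [sum2_congr n (h := fun i j =>
                ginv n b g i j * F x (b i) (b j) y
                + c * (ginv n b g i j * (g (b i) y * Ric n b g F x (b j)))
                + (-(c * g x y)) * (ginv n b g i j * Ric n b g F (b i) (b j)))
              (fun i j => by
                simp only [Pi.add_apply, Pi.smul_apply, smul_eq_mul, wedge]
                ring)]
            rw [sum2_add n _ _, sum2_add n _ _, sum2_smul n c _,
              sum2_smul n (-(c * g x y)) _, ← htR,
              contract1 n b g hgb hgs hgnd (huR x) y]
            rfl
          rw [eL, eR] at esum
          exact esum
        have h2' : 1 - c + c * (n:ℝ) = 2 := by linear_combination hcval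
        have etr : tR + c * tS + (-(c * tS)) * (n:ℝ)
            = tS + c * tR + (-(c * tR)) * (n:ℝ) := by
          have e0 : (∑ k, ∑ l, ginv n b g k l *
                (Ric n b g F (b k) (b l) + c * RicS n b g F (b k) (b l)
                  + (-(c * g (b k) (b l))) * tS))
              = ∑ k, ∑ l, ginv n b g k l *
                (RicS n b g F (b k) (b l) + c * Ric n b g F (b k) (b l)
                  + (-(c * g (b k) (b l))) * tR) :=
            sum2_congr n fun k l => by rw [hmain (b k) (b l)]
          have expandL : ∀ (A B : V → V → ℝ) (t : ℝ),
              (∑ k, ∑ l, ginv n b g k l * (A (b k) (b l) + c * B (b k) (b l)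
                + (-(c * g (b k) (b l))) * t))
              = (∑ k, ∑ l, ginv n b g k l * A (b k) (b l))
                + c * (∑ k, ∑ l, ginv n b g k l * B (b k) (b l))
                + (-(c * t)) * (∑ k, ∑ l, ginv n b g k l * g (b k) (b l)) := by
            intro A B t
            rw [sum2_congr n (h := fun k l =>
                ginv n b g k l * A (b k) (b l)
                + c * (ginv n b g k l * B (b k) (b l))
                + (-(c * t)) * (ginv n b g k l * g (b k) (b l)))
              (fun k l => by ring)]
            rw [sum2_add n _ _, sum2_add n _ _, sum2_smul n c _, sum2_smul n (-(c * t)) _]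
          rw [expandL (Ric n b g F) (RicS n b g F) tS,
            expandL (RicS n b g F) (Ric n b g F) tR,
            trace_g n b g hgb hgs hgnd, ← htR, ← htS] at e0
          linear_combination e0
        have htr : tR = tS := by
          linear_combination (1/2) * etr + ((tS - tR)/2) * h2'
        have hc1 : (1:ℝ) - c ≠ 0 := by
          intro h
          have : c = 1 := by linarith
          rw [this] at hcval
          have : (n:ℝ) = 2 := by linarith
          linarith
        have hRR : RicS n b g F = Ric n b g F := by
          funext x y
          apply mul_left_cancel₀ hc1
          linear_combination -(hmain x y) + (c * g x y) * htr
        rw [hRR] at hpp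
        exact add_right_cancel hpp
      · intro h
        rw [h]
    · -- R* = R ↔ R ∈ 𝔞(V)
      constructor
      · intro h
        refine ⟨⟨hFm, hFa, hFb⟩, fun x y z w => ?_⟩
        have h4 := congrFun (congrFun (congrFun (congrFun h x) y) z) w
        simp only [conj] at h4
        linarith
      · intro h
        funext x y z w
        simp only [conj]
        linarith [h.2 x y w z]

  · intro hconj hpz
    obtain ⟨hCm, hCa, hCb⟩ := hconj
    have hB2 : ∀ x y z w : V, F x y w z + F y z w x + F z x w y = 0 := by
      intro x y z w
      have h := hCb x y z w
      simp only [conj] at h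
      linarith
    have hE : ∀ y z : V, (∑ i, ∑ j, ginv n b g i j * F y z (b i) (b j)) = 0 := by
      intro y z
      have esum : (∑ i, ∑ j, ((ginv n b g i j * F (b i) y z (b j) +
          ginv n b g i j * F y z (b i) (b j)) + ginv n b g i j * F z (b i) y (b j))) = 0 := by
        rw [sum2_congr n (h := fun _ _ => (0:ℝ)) (fun i j => by
          have h := hFb (b i) y z (b j)
          linear_combination (ginv n b g i j) * h)]
        simp
      rw [sum2_add n _ _, sum2_add n _ _] at esum
      have e1 : (∑ i, ∑ j, ginv n b g i j * F (b i) y z (b j)) = Ric n b g F y z := rfl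
      have e3 : (∑ i, ∑ j, ginv n b g i j * F z (b i) y (b j)) = - Ric n b g F z y := by
        rw [sum2_congr n (h := fun i j => -(ginv n b g i j * F (b i) z y (b j)))
          (fun i j => by rw [hFa z (b i) y (b j)]; ring), sum2_neg n]
        rfl
      rw [e1, e3] at esum
      have e4 := hric y z
      linarith
    have hrs : ∀ x y : V, RicS n b g F x y = RicS n b g F y x := by
      intro y z
      have esum : (∑ i, ∑ j, ((ginv n b g i j * F (b i) y (b j) z +
          ginv n b g i j * F y z (b j) (b i)) + ginv n b g i j * F z (b i) (b j) y)) = 0 := by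
        rw [sum2_congr n (h := fun _ _ => (0:ℝ)) (fun i j => by
          have h := hB2 (b i) y z (b j)
          linear_combination (ginv n b g i j) * h)]
        simp
      rw [sum2_add n _ _, sum2_add n _ _] at esum
      have e1 : (∑ i, ∑ j, ginv n b g i j * F (b i) y (b j) z)
          = - RicS n b g F y z := by
        rw [sum2_congr n (h := fun i j => -(ginv n b g i j * F y (b i) (b j) z))
          (fun i j => by rw [hFa (b i) y (b j) z]; ring), sum2_neg n]
        rfl
      have e2 : (∑ i, ∑ j, ginv n b g i j * F y z (b j) (b i)) = 0 := by
        calc ∑ i, ∑ j, ginv n b g i j * F y z (b j) (b i)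
            = ∑ i, ∑ j, ginv n b g j i * F y z (b j) (b i) :=
              sum2_congr n fun i j => by rw [ginv_symm n b g hgs i j]
          _ = ∑ j, ∑ i, ginv n b g j i * F y z (b j) (b i) := Finset.sum_comm
          _ = 0 := hE y z
      have e3 : (∑ i, ∑ j, ginv n b g i j * F z (b i) (b j) y)
          = RicS n b g F z y := rfl
      rw [e1, e2, e3] at esum
      linarith
    have hRicC : Ric n b g (conj F) = RicS n b g F := by
      funext x y
      show (∑ i, ∑ j, ginv n b g i j * conj F (b i) x y (b j))
          = ∑ i, ∑ j, ginv n b g i j * F x (b i) (b j) y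
      refine sum2_congr n fun i j => ?_
      simp only [conj]
      rw [hFa x (b i) (b j) y]
    have h1c : pProj n b g (conj F) =
        conj F + ((1:ℝ)/((n:ℝ)-1)) • wedge 0 (RicS n b g F) g := by
      rw [part1 (conj F) (by rw [hRicC]; exact hrs), hRicC]
    -- conj F is determined
    have hcf : conj F = -(((1:ℝ)/((n:ℝ)-1)) • wedge 0 (RicS n b g F) g) :=
      eq_neg_of_add_eq_zero_left (h1c.symm.trans hpz)
    have hcval : ((1:ℝ)/((n:ℝ)-1)) * ((n:ℝ)-1) = 1 := by field_simp
    set c : ℝ := (1:ℝ)/((n:ℝ)-1) with hc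
    set tS : ℝ := ∑ i, ∑ j, ginv n b g i j * RicS n b g F (b i) (b j) with htS
    have huS : ∀ x : V, IsLin (fun t => RicS n b g F x t) := fun x =>
      isLin_dsum n (fun i j => hFm.2.2.2 x (b i) (b j)) _
    have eform : ∀ x y : V, Ric n b g F x y
        = (c * g x y) * tS + (-c) * RicS n b g F x y := by
      intro x y
      calc Ric n b g F x y
          = ∑ i, ∑ j, ginv n b g i j * F (b i) x y (b j) := rfl
        _ = ∑ i, ∑ j, ((c * g x y) * (ginv n b g i j * RicS n b g F (b i) (b j))
              + (-c) * (ginv n b g i j * (g (b i) y * RicS n b g F x (b j)))) := by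
            refine sum2_congr n fun i j => ?_
            have h := congrFun (congrFun (congrFun (congrFun hcf (b i)) x) (b j)) y
            simp only [Pi.neg_apply, Pi.smul_apply, smul_eq_mul, wedge, conj,
              zero_mul, sub_zero, mul_zero] at h
            linear_combination (-(ginv n b g i j)) * h
        _ = (c * g x y) * tS + (-c) * RicS n b g F x y := by
            rw [sum2_add n _ _, sum2_smul n (c * g x y) _, sum2_smul n (-c) _,
              ← htS, contract1 n b g hgb hgs hgnd (huS x) y]
    have hRform : ∀ x y : V, ((n:ℝ)-1) * Ric n b g F x y
        = tS * g x y - RicS n b g F x y := by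
      intro x y
      linear_combination ((n:ℝ)-1) * eform x y
        + (g x y * tS - RicS n b g F x y) * hcval
    have htau : tau n b g F = tS := by
      have h5 : ((n:ℝ)-1) * tau n b g F = ((n:ℝ)-1) * tS := by
        rw [tau_eq_trace n b g F]
        calc ((n:ℝ)-1) * ∑ j, ∑ k, ginv n b g j k * Ric n b g F (b j) (b k)
            = ∑ j, ∑ k, ((n:ℝ)-1) * (ginv n b g j k * Ric n b g F (b j) (b k)) :=
              (sum2_smul n _ _).symm
          _ = ∑ j, ∑ k, (tS * (ginv n b g j k * g (b j) (b k))
                + (-1) * (ginv n b g j k * RicS n b g F (b j) (b k))) :=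
              sum2_congr n fun j k => by
                linear_combination (ginv n b g j k) * hRform (b j) (b k)
          _ = tS * (∑ j, ∑ k, ginv n b g j k * g (b j) (b k))
                + (-1) * ∑ j, ∑ k, ginv n b g j k * RicS n b g F (b j) (b k) := by
              rw [sum2_add n _ _, sum2_smul n tS _, sum2_smul n (-1 : ℝ) _]
          _ = ((n:ℝ)-1) * tS := by
              rw [trace_g n b g hgb hgs hgnd, ← htS]
              ring
      exact mul_left_cancel₀ hn1 h5
    funext x y
    simp only [symB, Pi.add_apply, Pi.sub_apply, Pi.smul_apply, smul_eq_mul,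
      Pi.zero_apply]
    linear_combination (1/2) * hRform x y + (1/2) * hRform y x
      + (tS/2) * (hgs y x) + (-(g x y)) * htau



end GCT
end

section
/- If R ∈ 𝔯(V) satisfies ψ(R) = 0 and μ(R) = 0 (equivalently, R is ⟨·,·⟩_g-orthogonal to 𝔞(V) ⊕ 𝔰(V)), then Ric(R) is antisymmetric, i.e., Ric(R)(y,z) = −Ric(R)(z,y) for all y, z ∈ V, and Ric*(R) = 3·Ric(R). -/
open scoped BigOperators
open Pointwise

namespace GCT

variable {V : Type*} [AddCommGroup V] [Module ℝ V]

variable (n : ℕ) (b : Module.Basis (Fin n) ℝ V) (g : V → V → ℝ)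

theorem stmt11 {V : Type*} [AddCommGroup V] [Module ℝ V]
    (n : ℕ) (hn : 3 ≤ n) (b : Module.Basis (Fin n) ℝ V)
    (g : V → V → ℝ) (hgb : IsBilin g) (hgs : ∀ x y, g x y = g y x)
    (hgnd : ∀ x : V, (∀ y : V, g x y = 0) → x = 0) :
    ∀ F ∈ rSet V, psi F = 0 → mu F = 0 →
      (∀ y z, Ric n b g F y z = - Ric n b g F z y) ∧
      RicS n b g F = (3 : ℝ) • Ric n b g F := by
  intro F hF hψ hμ
  obtain ⟨-, hA, hB⟩ := hF
  have hψ' : ∀ x y z w, F x y z w + F y x w z + F z w x y + F w z y x = 0 := by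
    intro x y z w
    have h := congrFun (congrFun (congrFun (congrFun hψ x) y) z) w
    simp only [psi, Pi.zero_apply] at h
    linarith
  have hμ' : ∀ x y z w,
      3 * F x y z w + 3 * F x y w z + F x w z y + F x z w y + F w y z x + F z y w x = 0 := by
    intro x y z w
    have h := congrFun (congrFun (congrFun (congrFun hμ x) y) z) w
    simp only [mu, Pi.zero_apply] at h
    linarith
  -- symmetry of the inverse metric
  have hMsymm : Matrix.transpose (Matrix.of fun i j => g (b i) (b j))
      = Matrix.of fun i j => g (b i) (b j) := by
    ext i j
    simp [Matrix.transpose_apply, hgs (b j) (b i)]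
  have hsymInv : Matrix.transpose ((Matrix.of fun i j => g (b i) (b j))⁻¹)
      = (Matrix.of fun i j => g (b i) (b j))⁻¹ := by
    rw [Matrix.transpose_nonsing_inv, hMsymm]
  have Gsymm : ∀ i j, ginv n b g i j = ginv n b g j i := by
    intro i j
    have h2 : Matrix.transpose ((Matrix.of fun i j => g (b i) (b j))⁻¹) j i
        = (Matrix.of fun i j => g (b i) (b j))⁻¹ j i := by rw [hsymInv]
    rw [Matrix.transpose_apply] at h2
    simpa [ginv] using h2
  -- swapping the two contraction indices
  have key : ∀ f : Fin n → Fin n → ℝ,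
      (∑ i, ∑ j, ginv n b g i j * f i j) = ∑ i, ∑ j, ginv n b g i j * f j i := by
    intro f
    rw [Finset.sum_comm]
    apply Finset.sum_congr rfl
    intro j _
    apply Finset.sum_congr rfl
    intro i _
    rw [Gsymm i j]
  -- contraction on the first two slots vanishes
  have hC0 : ∀ u v, (∑ i, ∑ j, ginv n b g i j * F (b i) (b j) u v) = 0 := by
    intro u v
    have h := key (fun i j => F (b i) (b j) u v)
    have h2 : (∑ i, ∑ j, ginv n b g i j * F (b j) (b i) u v)
        = -∑ i, ∑ j, ginv n b g i j * F (b i) (b j) u v := by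
      have hpt : ∀ i j : Fin n, ginv n b g i j * F (b j) (b i) u v
          = -(ginv n b g i j * F (b i) (b j) u v) := fun i j => by
        linear_combination (ginv n b g i j) * hA (b j) (b i) u v
      calc (∑ i, ∑ j, ginv n b g i j * F (b j) (b i) u v)
          = ∑ i, ∑ j, -(ginv n b g i j * F (b i) (b j) u v) := by
            exact Finset.sum_congr rfl fun i _ => Finset.sum_congr rfl fun j _ => hpt i j
        _ = -∑ i, ∑ j, ginv n b g i j * F (b i) (b j) u v := by
            simp
    linarith [h, h2]
  -- first contracted identity, from ψ(F) = 0
  have eqA : ∀ u v, Ric n b g F u v + Ric n b g F v u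
      + RicS n b g F u v + RicS n b g F v u = 0 := by
    intro u v
    have hsum0 : (∑ i, ∑ j, (ginv n b g i j * F (b i) u v (b j)
        + ginv n b g i j * F u (b i) (b j) v
        + ginv n b g i j * F v (b j) (b i) u
        + ginv n b g i j * F (b j) v u (b i))) = 0 :=
      Finset.sum_eq_zero fun i _ => Finset.sum_eq_zero fun j _ => by
        linear_combination (ginv n b g i j) * hψ' (b i) u v (b j)
    have hsplit : (∑ i, ∑ j, (ginv n b g i j * F (b i) u v (b j)
        + ginv n b g i j * F u (b i) (b j) v
        + ginv n b g i j * F v (b j) (b i) u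
        + ginv n b g i j * F (b j) v u (b i)))
        = (∑ i, ∑ j, ginv n b g i j * F (b i) u v (b j))
          + (∑ i, ∑ j, ginv n b g i j * F u (b i) (b j) v)
          + (∑ i, ∑ j, ginv n b g i j * F v (b j) (b i) u)
          + (∑ i, ∑ j, ginv n b g i j * F (b j) v u (b i)) := by
      simp [Finset.sum_add_distrib]
    have k1 := key (fun i j => F v (b i) (b j) u)
    have k2 := key (fun i j => F (b i) v u (b j))
    simp only [Ric, RicS]
    linarith [hsum0, hsplit, k1, k2]
  -- second contracted identity, from μ(F) = 0
  have eqB : ∀ u v, 5 * Ric n b g F u v - Ric n b g F v u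
      - 3 * RicS n b g F u v - RicS n b g F v u = 0 := by
    intro u v
    have hP : ∀ i j : Fin n, 3 * F (b i) u v (b j) + (-3) * F u (b i) (b j) v
        + F (b i) (b j) v u + (-1) * F v (b i) (b j) u
        + 2 * F (b j) u v (b i) + (-1) * F (b j) v u (b i) = 0 := by
      intro i j
      have h1 := hμ' (b i) u v (b j)
      have h2 := hA (b i) u (b j) v
      have h3 := hA (b i) v (b j) u
      have h4 := hA u (b j) v (b i)
      have h5 := hB v u (b j) (b i)
      linarith
    have hsum0 : (∑ i, ∑ j, (3 * (ginv n b g i j * F (b i) u v (b j))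
        + (-3) * (ginv n b g i j * F u (b i) (b j) v)
        + (ginv n b g i j * F (b i) (b j) v u)
        + (-1) * (ginv n b g i j * F v (b i) (b j) u)
        + 2 * (ginv n b g i j * F (b j) u v (b i))
        + (-1) * (ginv n b g i j * F (b j) v u (b i)))) = 0 :=
      Finset.sum_eq_zero fun i _ => Finset.sum_eq_zero fun j _ => by
        linear_combination (ginv n b g i j) * hP i j
    have hsplit : (∑ i, ∑ j, (3 * (ginv n b g i j * F (b i) u v (b j))
        + (-3) * (ginv n b g i j * F u (b i) (b j) v)
        + (ginv n b g i j * F (b i) (b j) v u)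
        + (-1) * (ginv n b g i j * F v (b i) (b j) u)
        + 2 * (ginv n b g i j * F (b j) u v (b i))
        + (-1) * (ginv n b g i j * F (b j) v u (b i))))
        = 3 * (∑ i, ∑ j, ginv n b g i j * F (b i) u v (b j))
          + (-3) * (∑ i, ∑ j, ginv n b g i j * F u (b i) (b j) v)
          + (∑ i, ∑ j, ginv n b g i j * F (b i) (b j) v u)
          + (-1) * (∑ i, ∑ j, ginv n b g i j * F v (b i) (b j) u)
          + 2 * (∑ i, ∑ j, ginv n b g i j * F (b j) u v (b i))
          + (-1) * (∑ i, ∑ j, ginv n b g i j * F (b j) v u (b i)) := by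
      simp [Finset.sum_add_distrib, Finset.mul_sum]
    have k1 := key (fun i j => F (b i) u v (b j))
    have k2 := key (fun i j => F (b i) v u (b j))
    have hc := hC0 v u
    simp only [Ric, RicS]
    linarith [hsum0, hsplit, k1, k2, hc]
  constructor
  · intro y z
    have A := eqA y z
    have B1 := eqB y z
    have B2 := eqB z y
    linarith
  · funext y z
    have A := eqA y z
    have B1 := eqB y z
    simp only [Pi.smul_apply, smul_eq_mul]
    linarith

end GCT
end
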